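/- arXiv:math/0011261 — 3 statements merged into one kernel-verified Lean document; each statement's English description precedes it below -/
import Mathlib

section
/- Euler's relation: ζ(1,2) = ζ(3), i.e. ∑_{0 < n_1 < n_2} 1/(n_1 n_2^2) = ∑_{n≥1} 1/n^3. -/
open Filter Finset Topology Set

/-- Harmonic number `H m = ∑_{j<m} 1/(j+1)`. -/
private noncomputable def Hh (m : ℕ) : ℝ := ∑ j ∈ Finset.range m, 1 / ((j : ℝ) + 1)

private lemma telescope_hasSum (d : ℕ → ℝ) (hd : ∀ i j : ℕ, i ≤ j → d j ≤ d i)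
    (h0 : Tendsto d atTop (𝓝 0)) (m : ℕ) :
    HasSum (fun n => d n - d (n + m)) (∑ j ∈ Finset.range m, d j) := by
  have hnn : ∀ n, 0 ≤ d n - d (n + m) := fun n =>
    sub_nonneg.2 (hd n (n + m) (Nat.le_add_right _ _))
  have hdnn : ∀ n, 0 ≤ d n := fun n =>
    le_of_tendsto h0 (Filter.eventually_atTop.2 ⟨n, fun k hk => hd n k hk⟩)
  have key : ∀ N, ∑ n ∈ Finset.range N, (d n - d (n + m)) =
      ∑ j ∈ Finset.range m, d j - ∑ j ∈ Finset.range m, d (N + j) := by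
    intro N
    have h1 := Finset.sum_range_add d m N
    have h2 := Finset.sum_range_add d N m
    have h3 : ∑ n ∈ Finset.range N, d (n + m) = ∑ n ∈ Finset.range N, d (m + n) := by
      refine Finset.sum_congr rfl fun n _ => by rw [Nat.add_comm]
    have h5 : m + N = N + m := Nat.add_comm m N
    rw [h5] at h1
    rw [Finset.sum_sub_distrib, h3]
    linarith
  refine (hasSum_iff_tendsto_nat_of_nonneg hnn _).2 ?_
  simp only [key]
  have ht : Tendsto (fun N => ∑ j ∈ Finset.range m, d (N + j)) atTop (𝓝 0) := by
    have h := tendsto_finset_sum (Finset.range m)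
      (fun j _ => h0.comp (tendsto_add_atTop_nat j) : ∀ j ∈ Finset.range m,
        Tendsto (fun N => d (N + j)) atTop (𝓝 0))
    simpa using h
  simpa using tendsto_const_nhds.sub ht

private lemma dd_hasSum (c : ℝ) (hc : 0 < c) (m : ℕ) :
    HasSum (fun n : ℕ => 1 / ((n : ℝ) + c) - 1 / ((n : ℝ) + (m : ℝ) + c))
      (∑ j ∈ Finset.range m, 1 / ((j : ℝ) + c)) := by
  have hfun : (fun n : ℕ => 1 / ((n : ℝ) + c) - 1 / ((n : ℝ) + (m : ℝ) + c)) =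
      fun n => (fun k : ℕ => 1 / ((k : ℝ) + c)) n - (fun k : ℕ => 1 / ((k : ℝ) + c)) (n + m) := by
    funext n; push_cast; ring_nf
  rw [hfun]
  refine telescope_hasSum _ (fun i j hij => ?_) ?_ m
  · refine one_div_le_one_div_of_le (by positivity) ?_
    have : (i : ℝ) ≤ j := Nat.cast_le.2 hij
    linarith
  · have h1 : Tendsto (fun n : ℕ => (n : ℝ) + c) atTop atTop :=
      tendsto_atTop_add_const_right _ c tendsto_natCast_atTop_atTop
    simpa [one_div, Pi.inv_def] using h1.inv_tendsto_atTop

private noncomputable def Gf : ℕ × ℕ → ℝ :=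
  fun p => 1 / (((p.1 : ℝ) + 1) * ((p.1 : ℝ) + (p.2 : ℝ) + 2) ^ 2)

private noncomputable def Ff : ℕ × ℕ → ℝ :=
  fun p => 1 / (((p.1 : ℝ) + 1) * (((p.2 : ℝ) + 1) * ((p.1 : ℝ) + (p.2 : ℝ) + 2)))

private lemma summable_inv_sq : Summable (fun n : ℕ => 1 / ((n : ℝ) + 1) ^ 2) := by
  have h := (summable_nat_add_iff 1).2 (Real.summable_one_div_nat_pow.2 one_lt_two)
  refine h.congr fun n => ?_
  push_cast
  ring

private lemma summable_inv_cube : Summable (fun n : ℕ => 1 / ((n : ℝ) + 1) ^ 3) := by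
  have h := (summable_nat_add_iff 1).2 (Real.summable_one_div_nat_pow.2 (by norm_num : 1 < 3))
  refine h.congr fun n => ?_
  push_cast
  ring

private lemma slice_Gf (m : ℕ) : Summable fun n => Gf (m, n) := by
  refine Summable.of_nonneg_of_le (fun n => by unfold Gf; positivity) (fun n => ?_) summable_inv_sq
  unfold Gf
  refine one_div_le_one_div_of_le (by positivity) ?_
  have h1 : (1 : ℝ) ≤ (m : ℝ) + 1 := by have := Nat.cast_nonneg (α := ℝ) m; linarith
  have h2 : ((n : ℝ) + 1) ^ 2 ≤ ((m : ℝ) + (n : ℝ) + 2) ^ 2 := by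
    have := Nat.cast_nonneg (α := ℝ) m
    have := Nat.cast_nonneg (α := ℝ) n
    nlinarith
  nlinarith [sq_nonneg ((n : ℝ) + 1)]

private lemma tsum_slice_Gf_le (m : ℕ) : ∑' n, Gf (m, n) ≤ 1 / ((m : ℝ) + 1) ^ 2 := by
  have htel := (dd_hasSum ((m : ℝ) + 1) (by positivity) 1).mul_left (1 / ((m : ℝ) + 1))
  have hval : (1 / ((m : ℝ) + 1)) * (∑ j ∈ Finset.range 1, 1 / ((j : ℝ) + ((m : ℝ) + 1))) =
      1 / ((m : ℝ) + 1) ^ 2 := by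
    rw [Finset.sum_range_one]
    push_cast
    rw [zero_add, one_div_mul_one_div, ← pow_two]
  have hle : ∀ n : ℕ, Gf (m, n) ≤
      (1 / ((m : ℝ) + 1)) * (1 / ((n : ℝ) + ((m : ℝ) + 1)) - 1 / ((n : ℝ) + (1 : ℕ) + ((m : ℝ) + 1))) := by
    intro n
    have hmn : (0 : ℝ) ≤ (m : ℝ) := Nat.cast_nonneg m
    have hnn : (0 : ℝ) ≤ (n : ℝ) := Nat.cast_nonneg n
    have e1 : (1 / ((n : ℝ) + ((m : ℝ) + 1)) - 1 / ((n : ℝ) + (1 : ℕ) + ((m : ℝ) + 1))) =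
        1 / (((n : ℝ) + (m : ℝ) + 1) * ((n : ℝ) + (m : ℝ) + 2)) := by
      push_cast
      rw [div_sub_div _ _ (by positivity) (by positivity)]
      ring_nf
    rw [e1]
    unfold Gf
    rw [one_div_mul_one_div]
    refine one_div_le_one_div_of_le (by positivity) ?_
    nlinarith
  calc ∑' n, Gf (m, n) ≤ ∑' n : ℕ, (1 / ((m : ℝ) + 1)) *
        (1 / ((n : ℝ) + ((m : ℝ) + 1)) - 1 / ((n : ℝ) + (1 : ℕ) + ((m : ℝ) + 1))) := by
        refine Summable.tsum_le_tsum hle (slice_Gf m) ?_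
        exact htel.summable
    _ = 1 / ((m : ℝ) + 1) ^ 2 := by
        rw [htel.tsum_eq]
        simpa using hval

private lemma summable_Gf : Summable Gf := by
  refine (summable_prod_of_nonneg (fun p => by unfold Gf; positivity)).2
    ⟨fun m => slice_Gf m, ?_⟩
  refine Summable.of_nonneg_of_le (fun m => tsum_nonneg fun n => by unfold Gf; positivity)
    (fun m => tsum_slice_Gf_le m) summable_inv_sq

set_option maxHeartbeats 1000000 in
private lemma Ff_eq (p : ℕ × ℕ) : Ff p = Gf p + Gf p.swap := by
  obtain ⟨a, b⟩ := p
  unfold Ff Gf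
  have h1 : ((a : ℝ) + 1) ≠ 0 := by positivity
  have h2 : ((b : ℝ) + 1) ≠ 0 := by positivity
  have h3 : ((a : ℝ) + (b : ℝ) + 2) ≠ 0 := by positivity
  have h4 : ((b : ℝ) + (a : ℝ) + 2) ≠ 0 := by positivity
  simp only [Prod.swap_prod_mk, Prod.fst, Prod.snd]
  field_simp
  ring

private lemma summable_Gf_swap : Summable (fun p : ℕ × ℕ => Gf p.swap) :=
  (Equiv.prodComm ℕ ℕ).summable_iff.2 summable_Gf

private lemma summable_Ff : Summable Ff := by
  refine ((summable_Gf.add summable_Gf_swap).congr fun p => ?_)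
  exact (Ff_eq p).symm

private lemma tsum_Ff_eq_two_tsum_Gf : ∑' p, Ff p = 2 * ∑' p, Gf p := by
  have h1 : ∑' p, Ff p = ∑' p, (Gf p + Gf p.swap) := tsum_congr Ff_eq
  have h2 : ∑' p : ℕ × ℕ, Gf p.swap = ∑' p, Gf p := (Equiv.prodComm ℕ ℕ).tsum_eq Gf
  rw [h1, Summable.tsum_add summable_Gf summable_Gf_swap, h2]
  ring

private lemma Ffib (m : ℕ) :
    HasSum (fun n => Ff (m, n)) ((1 / ((m : ℝ) + 1) ^ 2) * Hh (m + 1)) := by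
  have h := (dd_hasSum 1 one_pos (m + 1)).mul_left (1 / ((m : ℝ) + 1) ^ 2)
  have hfun : (fun n : ℕ => (1 / ((m : ℝ) + 1) ^ 2) *
      (1 / ((n : ℝ) + 1) - 1 / ((n : ℝ) + ((m + 1 : ℕ) : ℝ) + 1))) = fun n => Ff (m, n) := by
    funext n
    unfold Ff
    have hmn : (0 : ℝ) ≤ (m : ℝ) := Nat.cast_nonneg m
    have hnn : (0 : ℝ) ≤ (n : ℝ) := Nat.cast_nonneg n
    push_cast
    rw [div_sub_div _ _ (by positivity) (by positivity), div_mul_div_comm]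
    rw [div_eq_div_iff (by positivity) (by positivity)]
    ring
  rw [hfun] at h
  have hval : (∑ j ∈ Finset.range (m + 1), 1 / ((j : ℝ) + 1)) = Hh (m + 1) := by
    simp [Hh]
  rw [hval] at h
  exact h

private lemma outer_hasSum :
    HasSum (fun m : ℕ => (1 / ((m : ℝ) + 1) ^ 2) * Hh (m + 1)) (∑' p, Ff p) :=
  summable_Ff.hasSum.prod_fiberwise Ffib

/-- the equivalence `ℕ × ℕ ≃ {(a,b) | 0 < a < b}`. -/
private def Ee : ℕ × ℕ ≃ {p : ℕ × ℕ // 0 < p.1 ∧ p.1 < p.2} where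
  toFun q := ⟨(q.1 + 1, q.1 + q.2 + 2), by omega⟩
  invFun p := (p.1.1 - 1, p.1.2 - p.1.1 - 1)
  left_inv q := by
    obtain ⟨a, b⟩ := q
    simp
    omega
  right_inv p := by
    obtain ⟨⟨a, b⟩, h1, h2⟩ := p
    simp only [Subtype.mk.injEq, Prod.mk.injEq]
    omega

private lemma T_eq_tsum_Gf :
    (∑' p : {p : ℕ × ℕ // 0 < p.1 ∧ p.1 < p.2},
      (1 : ℝ) / ((p.1.1 : ℝ) * (p.1.2 : ℝ) ^ 2)) = ∑' p, Gf p := by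
  rw [← Ee.tsum_eq (fun p : {p : ℕ × ℕ // 0 < p.1 ∧ p.1 < p.2} =>
    (1 : ℝ) / ((p.1.1 : ℝ) * (p.1.2 : ℝ) ^ 2))]
  refine tsum_congr fun q => ?_
  obtain ⟨a, b⟩ := q
  unfold Gf
  simp only [Ee, Equiv.coe_fn_mk]
  push_cast
  ring_nf

private lemma summable_subfun :
    Summable (fun p : {p : ℕ × ℕ // 0 < p.1 ∧ p.1 < p.2} =>
      (1 : ℝ) / ((p.1.1 : ℝ) * (p.1.2 : ℝ) ^ 2)) := by
  rw [← Ee.summable_iff]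
  refine summable_Gf.congr fun q => ?_
  obtain ⟨a, b⟩ := q
  unfold Gf
  simp only [Ee, Equiv.coe_fn_mk, Function.comp]
  push_cast
  ring_nf

private noncomputable def Jf : ℕ → ℝ := fun b => Hh (b - 1) / (b : ℝ) ^ 2

private lemma T_eq_harmonic :
    (∑' p : {p : ℕ × ℕ // 0 < p.1 ∧ p.1 < p.2},
      (1 : ℝ) / ((p.1.1 : ℝ) * (p.1.2 : ℝ) ^ 2)) =
    ∑' m : ℕ, (1 / ((m : ℝ) + 1) ^ 2) * Hh m := by
  set s : Set (ℕ × ℕ) := {p | 0 < p.1 ∧ p.1 < p.2} with hs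
  set f : ℕ × ℕ → ℝ := fun p => (1 : ℝ) / ((p.1 : ℝ) * (p.2 : ℝ) ^ 2) with hf
  have hT : (∑' p : {p : ℕ × ℕ // 0 < p.1 ∧ p.1 < p.2},
      (1 : ℝ) / ((p.1.1 : ℝ) * (p.1.2 : ℝ) ^ 2)) = ∑' p, s.indicator f p :=
    tsum_subtype s f
  have hIs : Summable (s.indicator f) := summable_subtype_iff_indicator.1 summable_subfun
  have hswap : ∑' q : ℕ × ℕ, s.indicator f q.swap = ∑' p, s.indicator f p :=
    (Equiv.prodComm ℕ ℕ).tsum_eq (s.indicator f)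
  have hIswap : Summable (fun q : ℕ × ℕ => s.indicator f q.swap) :=
    (Equiv.prodComm ℕ ℕ).summable_iff.2 hIs
  have hfib : ∀ b : ℕ, HasSum (fun a => s.indicator f (a, b)) (Jf b) := by
    intro b
    have hfin : ∀ a ∉ Finset.range b, s.indicator f (a, b) = 0 := by
      intro a ha
      rw [Set.indicator_apply_eq_zero]
      intro hmem
      exfalso
      simp only [hs, Set.mem_setOf_eq] at hmem
      simp only [Finset.mem_range] at ha
      omega
    have h := hasSum_sum_of_ne_finset_zero (L := SummationFilter.unconditional ℕ) hfin
    have hval : ∑ a ∈ Finset.range b, s.indicator f (a, b) = Jf b := by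
      cases b with
      | zero => simp [Jf, Hh]
      | succ c =>
        rw [Finset.sum_range_succ']
        have h0 : s.indicator f (0, c + 1) = 0 := by
          rw [Set.indicator_apply_eq_zero]
          intro hmem
          exfalso
          simp only [hs, Set.mem_setOf_eq] at hmem
          omega
        have hterm : ∀ i ∈ Finset.range c, s.indicator f (i + 1, c + 1) =
            (1 / ((i : ℝ) + 1)) * (1 / ((c : ℝ) + 1) ^ 2) := by
          intro i hi
          simp only [Finset.mem_range] at hi
          have hmem : (i + 1, c + 1) ∈ s := by
            simp only [hs, Set.mem_setOf_eq]
            omega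
          rw [Set.indicator_of_mem hmem]
          simp only [hf]
          have hi1 : ((i : ℝ) + 1) ≠ 0 := by positivity
          have hc1 : ((c : ℝ) + 1) ≠ 0 := by positivity
          push_cast
          field_simp
        rw [Finset.sum_congr rfl hterm, h0, add_zero, ← Finset.sum_mul]
        simp only [Jf, Nat.add_sub_cancel]
        rw [Hh]
        push_cast
        ring
    rw [← hval]
    exact h
  have hJ : HasSum Jf (∑' q : ℕ × ℕ, s.indicator f q.swap) :=
    hIswap.hasSum.prod_fiberwise fun b => hfib b
  have h1 : (∑' p : {p : ℕ × ℕ // 0 < p.1 ∧ p.1 < p.2},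
      (1 : ℝ) / ((p.1.1 : ℝ) * (p.1.2 : ℝ) ^ 2)) = ∑' b, Jf b := by
    rw [hT, ← hswap, hJ.tsum_eq]
  rw [h1, Summable.tsum_eq_zero_add hJ.summable]
  have hJ0 : Jf 0 = 0 := by simp [Jf, Hh]
  rw [hJ0, zero_add]
  refine tsum_congr fun c => ?_
  simp only [Jf, Nat.add_sub_cancel]
  push_cast
  rw [div_eq_mul_one_div, mul_comm]

private lemma Hh_nonneg (m : ℕ) : 0 ≤ Hh m :=
  Finset.sum_nonneg fun j _ => by positivity

private lemma Hh_succ (m : ℕ) : Hh (m + 1) = Hh m + 1 / ((m : ℝ) + 1) := by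
  simp [Hh, Finset.sum_range_succ]

private lemma summable_harmonic_piece :
    Summable (fun m : ℕ => (1 / ((m : ℝ) + 1) ^ 2) * Hh m) := by
  refine Summable.of_nonneg_of_le
    (fun m => mul_nonneg (by positivity) (Hh_nonneg m)) (fun m => ?_) outer_hasSum.summable
  have h1 : Hh m ≤ Hh (m + 1) := by
    rw [Hh_succ]
    have : (0:ℝ) ≤ 1 / ((m : ℝ) + 1) := by positivity
    linarith
  have h2 : (0:ℝ) ≤ 1 / ((m : ℝ) + 1) ^ 2 := by positivity
  exact mul_le_mul_of_nonneg_left h1 h2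

/-- Euler's relation `ζ(1,2) = ζ(3)`:
`∑_{0 < n₁ < n₂} 1/(n₁ n₂²) = ∑_{n ≥ 1} 1/n³`. -/
theorem zeta_one_two_eq_zeta_three :
    (∑' p : {p : ℕ × ℕ // 0 < p.1 ∧ p.1 < p.2},
      (1 : ℝ) / ((p.1.1 : ℝ) * (p.1.2 : ℝ) ^ 2)) =
    ∑' n : ℕ+, (1 : ℝ) / (n : ℝ) ^ 3 := by
  set T : ℝ := (∑' p : {p : ℕ × ℕ // 0 < p.1 ∧ p.1 < p.2},
      (1 : ℝ) / ((p.1.1 : ℝ) * (p.1.2 : ℝ) ^ 2)) with hTdef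
  have hz3 : (∑' n : ℕ+, (1 : ℝ) / (n : ℝ) ^ 3) = ∑' m : ℕ, 1 / ((m : ℝ) + 1) ^ 3 := by
    rw [← Equiv.pnatEquivNat.symm.tsum_eq (fun n : ℕ+ => (1 : ℝ) / (n : ℝ) ^ 3)]
    refine tsum_congr fun m => ?_
    congr 1
    simp [Equiv.pnatEquivNat, Nat.succPNat]
  -- ∑' Ff = 2 T
  have h2T : ∑' p, Ff p = 2 * T := by
    rw [tsum_Ff_eq_two_tsum_Gf, hTdef, T_eq_tsum_Gf]
  -- ∑' Ff = T + ζ3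
  have hsplit : ∀ m : ℕ, (1 / ((m : ℝ) + 1) ^ 2) * Hh (m + 1) =
      (1 / ((m : ℝ) + 1) ^ 2) * Hh m + 1 / ((m : ℝ) + 1) ^ 3 := by
    intro m
    rw [Hh_succ]
    have h : ((m : ℝ) + 1) ≠ 0 := by positivity
    field_simp
  have hTz : ∑' p, Ff p = T + ∑' m : ℕ, 1 / ((m : ℝ) + 1) ^ 3 := by
    rw [← outer_hasSum.tsum_eq]
    calc ∑' m : ℕ, (1 / ((m : ℝ) + 1) ^ 2) * Hh (m + 1)
        = ∑' m : ℕ, ((1 / ((m : ℝ) + 1) ^ 2) * Hh m + 1 / ((m : ℝ) + 1) ^ 3) :=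
          tsum_congr hsplit
      _ = (∑' m : ℕ, (1 / ((m : ℝ) + 1) ^ 2) * Hh m) + ∑' m : ℕ, 1 / ((m : ℝ) + 1) ^ 3 :=
          Summable.tsum_add summable_harmonic_piece summable_inv_cube
      _ = T + ∑' m : ℕ, 1 / ((m : ℝ) + 1) ^ 3 := by
          rw [hTdef, T_eq_harmonic]
  rw [hz3]
  have := h2T.symm.trans hTz
  linarith
end

section
/- ζ(1,3) = (1/4)·ζ(4), i.e. ∑_{0 < n_1 < n_2} 1/(n_1 n_2^3) = (1/4)·∑_{n≥1} 1/n^4. -/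
open Function Set

namespace Z13aux

noncomputable def Fall : ℕ × ℕ → ℝ := fun p => 1 / ((p.1 : ℝ) ^ 2 * (p.2 : ℝ) ^ 2)
noncomputable def Flt : ℕ × ℕ → ℝ := fun p => if p.1 < p.2 then 1 / ((p.1 : ℝ) ^ 2 * (p.2 : ℝ) ^ 2) else 0
noncomputable def Fdiag : ℕ × ℕ → ℝ := fun p => if p.1 = p.2 then 1 / ((p.1 : ℝ) ^ 2 * (p.2 : ℝ) ^ 2) else 0
noncomputable def Fgt : ℕ × ℕ → ℝ := fun p => if p.2 < p.1 then 1 / ((p.1 : ℝ) ^ 2 * (p.2 : ℝ) ^ 2) else 0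
noncomputable def F13 : ℕ × ℕ → ℝ := fun p => if p.1 < p.2 then 1 / ((p.1 : ℝ) * (p.2 : ℝ) ^ 3) else 0

def i1 : ℕ × ℕ → ℕ × ℕ := fun p => (p.1, p.1 + p.2)
def i2 : ℕ × ℕ → ℕ × ℕ := fun p => (p.2, p.1 + p.2)

lemma i1_inj : Injective i1 := by
  rintro ⟨a, b⟩ ⟨c, d⟩ h
  simp only [i1, Prod.mk.injEq] at h
  simp only [Prod.mk.injEq]
  omega

lemma i2_inj : Injective i2 := by
  rintro ⟨a, b⟩ ⟨c, d⟩ h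
  simp only [i2, Prod.mk.injEq] at h
  simp only [Prod.mk.injEq]
  omega

lemma range_i1 : ∀ p : ℕ × ℕ, p.1 < p.2 → p ∈ Set.range i1 := by
  rintro ⟨a, b⟩ h
  exact ⟨(a, b - a), by simp only [i1]; simp at h ⊢; omega⟩

lemma range_i2 : ∀ p : ℕ × ℕ, p.1 < p.2 → p ∈ Set.range i2 := by
  rintro ⟨a, b⟩ h
  exact ⟨(b - a, a), by simp only [i2]; simp at h ⊢; omega⟩

lemma Flt_supp : support Flt ⊆ Set.range i1 := by
  intro p hp
  apply range_i1
  by_contra h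
  simp [Flt, h] at hp

lemma Flt_supp2 : support Flt ⊆ Set.range i2 := by
  intro p hp
  apply range_i2
  by_contra h
  simp [Flt, h] at hp

lemma F13_supp : support F13 ⊆ Set.range i1 := by
  intro p hp
  apply range_i1
  by_contra h
  simp [F13, h] at hp

lemma F13_supp2 : support F13 ⊆ Set.range i2 := by
  intro p hp
  apply range_i2
  by_contra h
  simp [F13, h] at hp

lemma Fall_nonneg : ∀ p, 0 ≤ Fall p := fun p => by unfold Fall; positivity
lemma Flt_nonneg : ∀ p, 0 ≤ Flt p := fun p => by unfold Flt; split <;> positivity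
lemma Fdiag_nonneg : ∀ p, 0 ≤ Fdiag p := fun p => by unfold Fdiag; split <;> positivity
lemma Fgt_nonneg : ∀ p, 0 ≤ Fgt p := fun p => by unfold Fgt; split <;> positivity
lemma F13_nonneg : ∀ p, 0 ≤ F13 p := fun p => by unfold F13; split <;> positivity

lemma summable_Fall : Summable Fall := by
  have h : Summable (fun n : ℕ => 1 / (n : ℝ) ^ 2) := Real.summable_one_div_nat_pow.mpr one_lt_two
  have := h.mul_of_nonneg h (fun n => by positivity) (fun n => by positivity)
  apply this.congr
  intro p
  simp only [Fall]
  rw [div_mul_div_comm, one_mul]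

lemma Flt_le : ∀ p, Flt p ≤ Fall p := by
  intro p
  unfold Flt Fall
  split <;> [exact le_refl _; positivity]

lemma Fdiag_le : ∀ p, Fdiag p ≤ Fall p := by
  intro p
  unfold Fdiag Fall
  split <;> [exact le_refl _; positivity]

lemma Fgt_le : ∀ p, Fgt p ≤ Fall p := by
  intro p
  unfold Fgt Fall
  split <;> [exact le_refl _; positivity]

lemma F13_le : ∀ p, F13 p ≤ Fall p := by
  rintro ⟨x, y⟩
  unfold F13 Fall
  split
  · rename_i h
    rcases Nat.eq_zero_or_pos x with hx | hx
    · subst hx; simp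
    have hx' : (1:ℝ) ≤ x := by exact_mod_cast hx
    have hy' : (0:ℝ) < y := by exact_mod_cast (by omega : 0 < y)
    have hx0 : (0:ℝ) < x := lt_of_lt_of_le one_pos hx'
    have hxy : (x:ℝ) ≤ y := by exact_mod_cast h.le
    have hd1 : (0:ℝ) < (x:ℝ)^2 * (y:ℝ)^2 := mul_pos (pow_pos hx0 2) (pow_pos hy' 2)
    have hd2 : (x:ℝ)^2 * (y:ℝ)^2 ≤ (x:ℝ) * (y:ℝ)^3 := by nlinarith
    exact div_le_div_of_nonneg_left one_pos.le hd1 hd2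
  · positivity

lemma summable_Flt : Summable Flt := Summable.of_nonneg_of_le Flt_nonneg Flt_le summable_Fall
lemma summable_Fdiag : Summable Fdiag := Summable.of_nonneg_of_le Fdiag_nonneg Fdiag_le summable_Fall
lemma summable_Fgt : Summable Fgt := Summable.of_nonneg_of_le Fgt_nonneg Fgt_le summable_Fall
lemma summable_F13 : Summable F13 := Summable.of_nonneg_of_le F13_nonneg F13_le summable_Fall

-- trichotomy pointwise
lemma tri (p : ℕ × ℕ) : Fall p = Flt p + Fdiag p + Fgt p := by
  obtain ⟨x, y⟩ := p
  unfold Fall Flt Fdiag Fgt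
  rcases lt_trichotomy x y with h | h | h
  · simp [h, Nat.ne_of_lt h, not_lt_of_gt h, asymm h]
  · subst h; simp
  · simp [h, Nat.ne_of_gt h, not_lt_of_gt h, asymm h]

-- partial fraction pointwise
lemma pf (p : ℕ × ℕ) : Fall p = Flt (i1 p) + Flt (i2 p) + 2 * F13 (i1 p) + 2 * F13 (i2 p) := by
  obtain ⟨x, y⟩ := p
  unfold Fall Flt F13 i1 i2
  simp only
  rcases Nat.eq_zero_or_pos x with hx | hx
  · subst hx; simp
  rcases Nat.eq_zero_or_pos y with hy | hy
  · subst hy; simp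
  have h1 : x < x + y := by omega
  have h2 : y < x + y := by omega
  simp only [h1, h2, if_pos]
  have hx' : (x:ℝ) ≠ 0 := Nat.cast_ne_zero.mpr (by omega)
  have hy' : (y:ℝ) ≠ 0 := Nat.cast_ne_zero.mpr (by omega)
  have hs' : ((x:ℝ) + (y:ℝ)) ≠ 0 := by positivity
  push_cast
  field_simp
  ring


lemma supp_to_range {f : ℕ × ℕ → ℝ} {i : ℕ × ℕ → ℕ × ℕ} (h : support f ⊆ Set.range i) :
    ∀ x ∉ Set.range i, f x = 0 := by
  intro x hx
  by_contra h0
  exact hx (h h0)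

lemma summable_Flt_i1 : Summable (fun p => Flt (i1 p)) :=
  ((i1_inj.summable_iff (supp_to_range Flt_supp)).mpr summable_Flt)
lemma summable_Flt_i2 : Summable (fun p => Flt (i2 p)) :=
  ((i2_inj.summable_iff (supp_to_range Flt_supp2)).mpr summable_Flt)
lemma summable_F13_i1 : Summable (fun p => F13 (i1 p)) :=
  ((i1_inj.summable_iff (supp_to_range F13_supp)).mpr summable_F13)
lemma summable_F13_i2 : Summable (fun p => F13 (i2 p)) :=
  ((i2_inj.summable_iff (supp_to_range F13_supp2)).mpr summable_F13)

lemma eq2 : ∑' p, Fall p = 2 * (∑' p, Flt p) + 4 * (∑' p, F13 p) := by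
  have h0 : ∑' p, Fall p
      = ∑' p, (Flt (i1 p) + Flt (i2 p) + 2 * F13 (i1 p) + 2 * F13 (i2 p)) := tsum_congr pf
  rw [h0]
  rw [Summable.tsum_add (((summable_Flt_i1.add summable_Flt_i2).add (summable_F13_i1.mul_left 2)))
      (summable_F13_i2.mul_left 2),
    Summable.tsum_add (summable_Flt_i1.add summable_Flt_i2) (summable_F13_i1.mul_left 2),
    Summable.tsum_add summable_Flt_i1 summable_Flt_i2, tsum_mul_left, tsum_mul_left]
  rw [i1_inj.tsum_eq Flt_supp, i2_inj.tsum_eq Flt_supp2, i1_inj.tsum_eq F13_supp,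
    i2_inj.tsum_eq F13_supp2]
  ring

lemma gt_eq_lt : ∑' p, Fgt p = ∑' p, Flt p := by
  rw [← (Equiv.prodComm ℕ ℕ).tsum_eq Fgt]
  apply tsum_congr
  rintro ⟨x, y⟩
  simp only [Equiv.prodComm_apply, Prod.swap_prod_mk, Fgt, Flt]
  rw [mul_comm]
  rfl

lemma diag_eq : ∑' p, Fdiag p = ∑' n : ℕ, 1 / (n : ℝ) ^ 4 := by
  have hinj : Injective (fun n : ℕ => ((n, n) : ℕ × ℕ)) := by
    intro a b h
    simpa using h
  have hsupp : support Fdiag ⊆ Set.range (fun n : ℕ => ((n, n) : ℕ × ℕ)) := by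
    rintro ⟨x, y⟩ hp
    by_contra h
    have : x ≠ y := by
      intro he
      exact h ⟨x, by simp [he]⟩
    simp [Fdiag, this] at hp
  rw [← hinj.tsum_eq hsupp]
  apply tsum_congr
  intro n
  rw [show Fdiag (n, n) = 1 / ((n:ℝ) ^ 2 * (n:ℝ) ^ 2) from if_pos rfl]
  ring

lemma eq1 : ∑' p, Fall p = 2 * (∑' p, Flt p) + ∑' n : ℕ, 1 / (n : ℝ) ^ 4 := by
  have h0 : ∑' p, Fall p = ∑' p, (Flt p + Fdiag p + Fgt p) := tsum_congr tri
  rw [h0, Summable.tsum_add (summable_Flt.add summable_Fdiag) summable_Fgt,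
    Summable.tsum_add summable_Flt summable_Fdiag, gt_eq_lt, diag_eq]
  ring

lemma zeta4_pnat : ∑' n : ℕ+, (1 : ℝ) / (n : ℝ) ^ 4 = ∑' n : ℕ, 1 / (n : ℝ) ^ 4 := by
  have hinj : Injective (fun n : ℕ+ => (n : ℕ)) := fun a b h => PNat.coe_injective h
  have hsupp : support (fun n : ℕ => 1 / (n : ℝ) ^ 4) ⊆ Set.range (fun n : ℕ+ => (n : ℕ)) := by
    intro n hn
    rcases Nat.eq_zero_or_pos n with h | h
    · subst h; simp [support] at hn
    · exact ⟨⟨n, h⟩, rfl⟩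
  rw [← hinj.tsum_eq hsupp]

lemma lhs_eq : (∑' p : {p : ℕ × ℕ // 0 < p.1 ∧ p.1 < p.2},
    (1 : ℝ) / ((p.1.1 : ℝ) * (p.1.2 : ℝ) ^ 3)) = ∑' p, F13 p := by
  have h : (∑' p : {p : ℕ × ℕ // 0 < p.1 ∧ p.1 < p.2},
      (1 : ℝ) / ((p.1.1 : ℝ) * (p.1.2 : ℝ) ^ 3)) =
      ∑' x : ℕ × ℕ, ({p : ℕ × ℕ | 0 < p.1 ∧ p.1 < p.2}).indicator
        (fun p => (1 : ℝ) / ((p.1 : ℝ) * (p.2 : ℝ) ^ 3)) x :=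
    tsum_subtype {p : ℕ × ℕ | 0 < p.1 ∧ p.1 < p.2}
      (fun p => (1 : ℝ) / ((p.1 : ℝ) * (p.2 : ℝ) ^ 3))
  rw [h]
  apply tsum_congr
  rintro ⟨x, y⟩
  rw [Set.indicator_apply]
  simp only [Set.mem_setOf_eq, F13]
  by_cases hxy : x < y
  · by_cases hx : 0 < x
    · simp [hxy, hx]
    · have hx0 : x = 0 := by omega
      simp [hxy, hx, hx0]
  · simp [hxy]

end Z13aux

/-- `ζ(1,3) = (1/4)·ζ(4)`:
`∑_{0 < n₁ < n₂} 1/(n₁ n₂³) = (1/4) ∑_{n ≥ 1} 1/n⁴`. -/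
theorem zeta_one_three_eq_quarter_zeta_four :
    (∑' p : {p : ℕ × ℕ // 0 < p.1 ∧ p.1 < p.2},
      (1 : ℝ) / ((p.1.1 : ℝ) * (p.1.2 : ℝ) ^ 3)) =
    (1 / 4) * ∑' n : ℕ+, (1 : ℝ) / (n : ℝ) ^ 4 := by
  have h1 := Z13aux.eq1
  have h2 := Z13aux.eq2
  rw [Z13aux.lhs_eq, Z13aux.zeta4_pnat]
  linarith
end

section
/- ζ(2,2) = (3/4)·ζ(4), i.e. ∑_{0 < n_1 < n_2} 1/(n_1^2 n_2^2) = (3/4)·∑_{n≥1} 1/n^4. -/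
open Real Set

private noncomputable def Fzz : ℕ × ℕ → ℝ := fun p => 1 / ((p.1 : ℝ) ^ 2 * (p.2 : ℝ) ^ 2)

private lemma hfunFzz : (fun p : ℕ × ℕ => (1 / (p.1 : ℝ) ^ 2) * (1 / (p.2 : ℝ) ^ 2)) = Fzz := by
  funext p; simp only [Fzz]; rw [div_mul_div_comm, one_mul]

set_option maxHeartbeats 1000000 in
private lemma summable_Fzz : Summable Fzz := by
  rw [← hfunFzz]
  have h1 : (0 : ℕ → ℝ) ≤ fun n : ℕ => 1 / (n : ℝ) ^ 2 := fun n => by positivity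
  exact Summable.mul_of_nonneg hasSum_zeta_two.summable hasSum_zeta_two.summable h1 h1

private lemma tsum_Fzz : (∑' p : ℕ × ℕ, Fzz p) = π ^ 2 / 6 * (π ^ 2 / 6) := by
  have h := summable_Fzz.hasSum
  rw [← hfunFzz] at h
  have h2 := (HasSum.mul_eq hasSum_zeta_two hasSum_zeta_two h).symm
  rwa [hfunFzz] at h2

private noncomputable def Azz : Set (ℕ × ℕ) := {p | p.1 < p.2}
private noncomputable def Dzz : Set (ℕ × ℕ) := {p | p.1 = p.2}
private noncomputable def Bzz : Set (ℕ × ℕ) := {p | p.2 < p.1}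

private lemma Fzz_split :
    Fzz = Azz.indicator Fzz + Dzz.indicator Fzz + Bzz.indicator Fzz := by
  funext p
  rcases lt_trichotomy p.1 p.2 with h | h | h
  · simp [Azz, Dzz, Bzz, indicator, h, h.ne, not_lt_of_gt h]
  · simp [Azz, Dzz, Bzz, indicator, h, lt_irrefl]
  · simp [Azz, Dzz, Bzz, indicator, h, h.ne', not_lt_of_gt h]

private noncomputable def eDzz : ℕ ≃ Dzz :=
  { toFun := fun n => ⟨(n, n), rfl⟩
    invFun := fun p => p.1.1
    left_inv := fun n => rfl
    right_inv := fun p => Subtype.ext (Prod.ext rfl p.2) }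

private lemma tsum_Dzz : (∑' p : ℕ × ℕ, Dzz.indicator Fzz p) = π ^ 4 / 90 := by
  rw [← tsum_subtype]
  rw [← eDzz.tsum_eq]
  have hterm : ∀ n : ℕ, Fzz (eDzz n : ℕ × ℕ) = 1 / (n : ℝ) ^ 4 := by
    intro n
    show (1 : ℝ) / ((n : ℝ) ^ 2 * (n : ℝ) ^ 2) = 1 / (n : ℝ) ^ 4
    norm_num
    ring
  rw [tsum_congr hterm]
  exact hasSum_zeta_four.tsum_eq

private lemma tsum_Bzz_eq_Azz :
    (∑' p : ℕ × ℕ, Bzz.indicator Fzz p) = ∑' p : ℕ × ℕ, Azz.indicator Fzz p := by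
  rw [← (Equiv.prodComm ℕ ℕ).tsum_eq (Bzz.indicator Fzz)]
  congr 1
  funext p
  rcases lt_or_ge p.1 p.2 with h | h
  · simp [Azz, Bzz, indicator, Equiv.prodComm, h, Fzz, mul_comm]
  · simp [Azz, Bzz, indicator, Equiv.prodComm, not_lt.2 h, Fzz, mul_comm]

private lemma tsum_Azz : (∑' p : ℕ × ℕ, Azz.indicator Fzz p) = π ^ 4 / 120 := by
  have hA : Summable (Azz.indicator Fzz) := summable_Fzz.indicator _
  have hD : Summable (Dzz.indicator Fzz) := summable_Fzz.indicator _
  have hB : Summable (Bzz.indicator Fzz) := summable_Fzz.indicator _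
  have key : (∑' p : ℕ × ℕ, Azz.indicator Fzz p) + (∑' p : ℕ × ℕ, Dzz.indicator Fzz p)
      + (∑' p : ℕ × ℕ, Bzz.indicator Fzz p) = π ^ 2 / 6 * (π ^ 2 / 6) := by
    rw [← Summable.tsum_add hA hD, ← Summable.tsum_add (hA.add hD) hB, ← tsum_Fzz]
    congr 1
    exact Fzz_split.symm
  rw [tsum_Dzz, tsum_Bzz_eq_Azz] at key
  nlinarith [key]

/-- `ζ(2,2) = (3/4)·ζ(4)`:
`∑_{0 < n₁ < n₂} 1/(n₁² n₂²) = (3/4) ∑_{n ≥ 1} 1/n⁴`. -/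
theorem zeta_two_two_eq_three_quarters_zeta_four :
    (∑' p : {p : ℕ × ℕ // 0 < p.1 ∧ p.1 < p.2},
      (1 : ℝ) / ((p.1.1 : ℝ) ^ 2 * (p.1.2 : ℝ) ^ 2)) =
    (3 / 4) * ∑' n : ℕ+, (1 : ℝ) / (n : ℝ) ^ 4 := by
  have hR : (∑' n : ℕ+, (1 : ℝ) / (n : ℝ) ^ 4) = π ^ 4 / 90 := by
    have : HasSum (fun n : ℕ+ => (1 : ℝ) / (n : ℝ) ^ 4) (π ^ 4 / 90) := by
      have h0 : ∀ x ∉ Set.range (fun n : ℕ+ => (n : ℕ)),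
          (1 : ℝ) / (x : ℝ) ^ 4 = 0 := by
        intro x hx
        have : x = 0 := by
          by_contra h0
          exact hx ⟨⟨x, Nat.pos_of_ne_zero h0⟩, rfl⟩
        simp [this]
      exact (Function.Injective.hasSum_iff (f := fun n : ℕ => (1 : ℝ) / (n : ℝ) ^ 4)
        (fun a b h => PNat.coe_injective h) h0).2 hasSum_zeta_four
    exact this.tsum_eq
  have hL : (∑' p : {p : ℕ × ℕ // 0 < p.1 ∧ p.1 < p.2},
      (1 : ℝ) / ((p.1.1 : ℝ) ^ 2 * (p.1.2 : ℝ) ^ 2)) = π ^ 4 / 120 := by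
    have h1 : (∑' p : {p : ℕ × ℕ // 0 < p.1 ∧ p.1 < p.2},
        (1 : ℝ) / ((p.1.1 : ℝ) ^ 2 * (p.1.2 : ℝ) ^ 2))
        = ∑' p : ℕ × ℕ, ({p : ℕ × ℕ | 0 < p.1 ∧ p.1 < p.2}).indicator Fzz p := by
      rw [← tsum_subtype]; rfl
    have h2 : ({p : ℕ × ℕ | 0 < p.1 ∧ p.1 < p.2}).indicator Fzz = Azz.indicator Fzz := by
      funext p
      rcases lt_or_ge p.1 p.2 with h | h
      · rcases Nat.eq_zero_or_pos p.1 with h0 | h0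
        · simp [Azz, indicator, h, h0, Fzz]
        · simp [Azz, indicator, h, h0]
      · simp [Azz, Set.indicator_apply, mem_setOf_eq, not_lt.2 h]
    rw [h1, h2, tsum_Azz]
  rw [hL, hR]
  ring
end
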